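/- For every integer k ≥ 0, the sequence (G(n,k))_{n≥k} is eventually constant: there exists an integer N ≥ k such that G(n,k) = G(N,k) for all integers n ≥ N. -/

import Mathlib

/-- Negate the `i`-th coordinate of a vertex `x` of the hypercube `{-1,1}^n`
(coordinates are `ℤˣ = {-1,1}`). -/
def flipCoord {n : ℕ} (x : Fin n → ℤˣ) (i : Fin n) : Fin n → ℤˣ :=
  Function.update x i (-(x i))

/-- `f` is a `k`-function: every vertex has exactly `k` neighbours where `f` differs. -/
def IsKFun {n : ℕ} {β : Type*} (k : ℕ) (f : (Fin n → ℤˣ) → β) : Prop :=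
  ∀ x, Set.ncard {i : Fin n | f (flipCoord x i) ≠ f x} = k

/-- `F n k`: the number of `k`-functions on `Q_n`. -/
noncomputable def numKFun (n k : ℕ) : ℕ :=
  Nat.card {f : (Fin n → ℤˣ) → ℤˣ // IsKFun k f}

/-- Two real-valued functions on `Q_n` are isomorphic: `f x = ε • g y` with
`y i = α i * x (σ i)` for a sign `ε`, a vector `α ∈ {-1,1}^n` and a permutation `σ`. -/
def Isom {n : ℕ} (f g : (Fin n → ℤˣ) → ℝ) : Prop :=
  ∃ (ε : ℤˣ) (α : Fin n → ℤˣ) (σ : Equiv.Perm (Fin n)),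
    ∀ x, f x = ((ε : ℤ) : ℝ) * g (fun i => α i * x (σ i))

/-- View a Boolean (`ℤˣ`-valued) function as real-valued. -/
noncomputable def toReal {n : ℕ} (f : (Fin n → ℤˣ) → ℤˣ) : (Fin n → ℤˣ) → ℝ :=
  fun x => ((f x : ℤ) : ℝ)

/-- `G n k`: the number of isomorphism classes of `k`-functions on `Q_n`. -/
noncomputable def numIsoKFun (n k : ℕ) : ℕ :=
  Nat.card (Quot fun (f g : {f : (Fin n → ℤˣ) → ℤˣ // IsKFun k f}) =>
    Isom (toReal f.1) (toReal g.1))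

namespace KAux

open Finset

abbrev Cube (n : ℕ) := Fin n → ℤˣ

lemma flip_self {n : ℕ} (x : Cube n) (i : Fin n) : flipCoord x i i = -(x i) := by
  simp [flipCoord]

lemma flip_ne {n : ℕ} (x : Cube n) {i j : Fin n} (h : j ≠ i) : flipCoord x i j = x j := by
  simp [flipCoord, Function.update_of_ne h]

lemma flip_flip {n : ℕ} (x : Cube n) (i : Fin n) : flipCoord (flipCoord x i) i = x := by
  funext j
  by_cases h : j = i
  · subst h; simp [flip_self]
  · simp [flip_ne _ h]

lemma flip_comm {n : ℕ} (x : Cube n) {i j : Fin n} (h : i ≠ j) :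
    flipCoord (flipCoord x i) j = flipCoord (flipCoord x j) i := by
  unfold flipCoord
  rw [Function.update_of_ne (Ne.symm h), Function.update_of_ne h, Function.update_comm h]

lemma units_eq_neg_of_ne (u v : ℤˣ) (h : u ≠ v) : v = -u := by
  rcases Int.units_eq_one_or u with h1 | h1 <;>
    rcases Int.units_eq_one_or v with h2 | h2 <;> simp_all

lemma units_mul_self' (u : ℤˣ) : u * u = 1 := by
  rcases Int.units_eq_one_or u with h1 | h1 <;> simp [h1]

open Classical in
noncomputable def sens {n : ℕ} (f : Cube n → ℤˣ) (x : Cube n) : Finset (Fin n) :=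
  univ.filter (fun i => f (flipCoord x i) ≠ f x)

open Classical in
lemma mem_sens {n : ℕ} (f : Cube n → ℤˣ) (x : Cube n) (i : Fin n) :
    i ∈ sens f x ↔ f (flipCoord x i) ≠ f x := by
  simp [sens]

lemma isKFun_iff {n : ℕ} (f : Cube n → ℤˣ) (k : ℕ) :
    IsKFun k f ↔ ∀ x, (sens f x).card = k := by
  classical
  unfold IsKFun
  apply forall_congr'
  intro x
  have : {i : Fin n | f (flipCoord x i) ≠ f x}.ncard = (sens f x).card := by
    rw [Set.ncard_eq_toFinset_card']
    congr 1
    ext i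
    simp [sens]
  rw [this]


def transf {n : ℕ} (α : Cube n) (σ : Equiv.Perm (Fin n)) (x : Cube n) : Cube n :=
  fun i => α i * x (σ i)

def IsomU {n : ℕ} (f g : Cube n → ℤˣ) : Prop :=
  ∃ (ε : ℤˣ) (α : Cube n) (σ : Equiv.Perm (Fin n)), ∀ x, f x = ε * g (transf α σ x)

lemma transf_transf {n : ℕ} (α β : Cube n) (σ τ : Equiv.Perm (Fin n)) (x : Cube n) :
    transf β τ (transf α σ x) = transf (fun i => β i * α (τ i)) (τ.trans σ) x := by
  funext i
  simp [transf, mul_assoc]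

lemma transf_flip {n : ℕ} (α : Cube n) (σ : Equiv.Perm (Fin n)) (x : Cube n) (j : Fin n) :
    transf α σ (flipCoord x j) = flipCoord (transf α σ x) (σ.symm j) := by
  funext i
  by_cases h : i = σ.symm j
  · subst h
    rw [flip_self]
    have : σ (σ.symm j) = j := σ.apply_symm_apply j
    simp [transf, this, flip_self]
  · have h2 : σ i ≠ j := fun hh => h (by simp [← hh])
    rw [flip_ne _ h]
    simp [transf, flip_ne _ h2]

lemma transf_inv {n : ℕ} (α : Cube n) (σ : Equiv.Perm (Fin n)) (y : Cube n) :
    transf α σ (transf (fun m => α (σ.symm m)) σ.symm y) = y := by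
  funext i
  simp [transf, ← mul_assoc, units_mul_self']

lemma isomU_refl {n : ℕ} (f : Cube n → ℤˣ) : IsomU f f :=
  ⟨1, 1, Equiv.refl _, fun x => by
    have : transf 1 (Equiv.refl _) x = x := funext fun i => one_mul _
    rw [this, one_mul]⟩

lemma isomU_symm {n : ℕ} {f g : Cube n → ℤˣ} (h : IsomU f g) : IsomU g f := by
  obtain ⟨ε, α, σ, h⟩ := h
  refine ⟨ε, fun m => α (σ.symm m), σ.symm, fun y => ?_⟩
  rw [h (transf (fun m => α (σ.symm m)) σ.symm y), transf_inv, ← mul_assoc, units_mul_self',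
    one_mul]

lemma isomU_trans {n : ℕ} {f g h : Cube n → ℤˣ} (h1 : IsomU f g) (h2 : IsomU g h) :
    IsomU f h := by
  obtain ⟨ε, α, σ, hfg⟩ := h1
  obtain ⟨δ, β, τ, hgh⟩ := h2
  refine ⟨ε * δ, fun i => β i * α (τ i), τ.trans σ, fun x => ?_⟩
  rw [hfg, hgh, ← mul_assoc, transf_transf]

def Relevant {n : ℕ} (f : Cube n → ℤˣ) (i : Fin n) : Prop :=
  ∃ x, f (flipCoord x i) ≠ f x

lemma not_relevant {n : ℕ} {f : Cube n → ℤˣ} {i : Fin n} (h : ¬ Relevant f i) (x : Cube n) :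
    f (flipCoord x i) = f x := by
  by_contra hc
  exact h ⟨x, hc⟩

lemma mem_sens_transf {n : ℕ} {f g : Cube n → ℤˣ} {ε : ℤˣ} {α : Cube n}
    {σ : Equiv.Perm (Fin n)} (h : ∀ x, f x = ε * g (transf α σ x)) (x : Cube n) (j : Fin n) :
    j ∈ sens f x ↔ σ.symm j ∈ sens g (transf α σ x) := by
  rw [mem_sens, mem_sens, h x, h (flipCoord x j), transf_flip]
  constructor
  · intro hne hgeq
    exact hne (by rw [hgeq])
  · intro hne heq
    exact hne (mul_left_cancel heq)

lemma sens_card_transf {n : ℕ} {f g : Cube n → ℤˣ} {ε : ℤˣ} {α : Cube n}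
    {σ : Equiv.Perm (Fin n)} (h : ∀ x, f x = ε * g (transf α σ x)) (x : Cube n) :
    (sens f x).card = (sens g (transf α σ x)).card := by
  classical
  have : sens f x = (sens g (transf α σ x)).image σ := by
    ext j
    rw [mem_sens_transf h x j, Finset.mem_image]
    constructor
    · intro hj; exact ⟨σ.symm j, hj, σ.apply_symm_apply j⟩
    · rintro ⟨i, hi, rfl⟩; simpa using hi
  rw [this, Finset.card_image_of_injective _ σ.injective]

lemma isKFun_of_isomU {n : ℕ} {k : ℕ} {f g : Cube n → ℤˣ} (h : IsomU f g)
    (hg : IsKFun k g) : IsKFun k f := by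
  obtain ⟨ε, α, σ, h⟩ := h
  rw [isKFun_iff] at hg ⊢
  intro x
  rw [sens_card_transf h x]
  exact hg _

lemma relevant_transf {n : ℕ} {f g : Cube n → ℤˣ} {ε : ℤˣ} {α : Cube n}
    {σ : Equiv.Perm (Fin n)} (h : ∀ x, f x = ε * g (transf α σ x)) (j : Fin n) :
    Relevant f j ↔ Relevant g (σ.symm j) := by
  constructor
  · rintro ⟨x, hx⟩
    have := (mem_sens_transf h x j).1 ((mem_sens f x j).2 hx)
    exact ⟨_, (mem_sens _ _ _).1 this⟩
  · rintro ⟨y, hy⟩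
    set x := transf (fun m => α (σ.symm m)) σ.symm y with hxdef
    have hyx : transf α σ x = y := transf_inv α σ y
    have := (mem_sens_transf h x j).2 (by rw [hyx]; exact (mem_sens _ _ _).2 hy)
    exact ⟨x, (mem_sens f x j).1 this⟩

lemma eq_of_agree_on_relevant {n : ℕ} (f : Cube n → ℤˣ) (x y : Cube n)
    (h : ∀ i, Relevant f i → x i = y i) : f x = f y := by
  classical
  suffices H : ∀ (m : ℕ) (x : Cube n), (Finset.univ.filter fun i => x i ≠ y i).card = m →
      (∀ i, Relevant f i → x i = y i) → f x = f y from
    H _ x rfl h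
  intro m
  induction m with
  | zero =>
    intro x hcard _
    have : ∀ i, x i = y i := by
      intro i
      by_contra hc
      have : i ∈ Finset.univ.filter fun i => x i ≠ y i := by simp [hc]
      rw [Finset.card_eq_zero] at hcard
      simp [hcard] at this
    exact congrArg f (funext this)
  | succ m ih =>
    intro x hcard hagree
    have hne : (Finset.univ.filter fun i => x i ≠ y i).Nonempty := by
      rw [← Finset.card_pos, hcard]; omega
    obtain ⟨j, hj⟩ := hne
    have hxj : x j ≠ y j := (Finset.mem_filter.1 hj).2
    have hjirr : ¬ Relevant f j := fun hr => hxj (hagree j hr)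
    set x' := flipCoord x j with hx'
    have hfx : f x' = f x := not_relevant hjirr x
    have hset : (Finset.univ.filter fun i => x' i ≠ y i) =
        (Finset.univ.filter fun i => x i ≠ y i).erase j := by
      ext i
      simp only [Finset.mem_filter, Finset.mem_erase, Finset.mem_univ, true_and]
      by_cases hij : i = j
      · subst hij
        have : x' i = y i := by
          rw [hx', flip_self, units_eq_neg_of_ne _ _ hxj]
        simp [this]
      · rw [hx', flip_ne _ hij]
        tauto
    have hcard' : (Finset.univ.filter fun i => x' i ≠ y i).card = m := by
      rw [hset, Finset.card_erase_of_mem hj, hcard]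
      omega
    have hagree' : ∀ i, Relevant f i → x' i = y i := by
      intro i hi
      by_cases hij : i = j
      · exact absurd (hij ▸ hi) hjirr
      · rw [hx', flip_ne _ hij]; exact hagree i hi
    rw [← hfx]
    exact ih x' hcard' hagree'

lemma flip_cons_succ {n : ℕ} (s : ℤˣ) (y : Cube n) (i : Fin n) :
    flipCoord (Fin.cons s y) i.succ = Fin.cons s (flipCoord y i) := by
  funext j
  rcases Fin.eq_zero_or_eq_succ j with rfl | ⟨m, rfl⟩
  · rw [flip_ne _ (Fin.succ_ne_zero i).symm]
    simp
  · by_cases hmi : m = i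
    · subst hmi
      rw [flip_self]
      simp [flip_self]
    · rw [flip_ne _ (fun hh => hmi (Fin.succ_injective _ hh))]
      simp [flip_ne _ hmi]

lemma flip_cons_zero {n : ℕ} (s : ℤˣ) (y : Cube n) :
    flipCoord (Fin.cons s y) 0 = Fin.cons (-s) y := by
  funext j
  rcases Fin.eq_zero_or_eq_succ j with rfl | ⟨m, rfl⟩
  · rw [flip_self]; simp
  · rw [flip_ne _ (Fin.succ_ne_zero m)]; simp

open Classical in
lemma card_filter_cons {n : ℕ} (A : Finset (Cube (n+1))) (s : ℤˣ) :
    (A.filter fun x => x 0 = s).card = (Finset.univ.filter fun y : Cube n => Fin.cons s y ∈ A).card := by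
  have himg : A.filter (fun x => x 0 = s) =
      (Finset.univ.filter fun y : Cube n => Fin.cons s y ∈ A).image (Fin.cons s) := by
    ext x
    simp only [Finset.mem_filter, Finset.mem_image, Finset.mem_univ, true_and]
    constructor
    · rintro ⟨hxA, hx0⟩
      exact ⟨Fin.tail x, by rw [← hx0, Fin.cons_self_tail]; exact hxA,
        by rw [← hx0, Fin.cons_self_tail]⟩
    · rintro ⟨y, hy, rfl⟩
      exact ⟨hy, Fin.cons_zero _ _⟩
  rw [himg, Finset.card_image_of_injective _ (Fin.cons_right_injective (α := fun _ : Fin (n+1) => ℤˣ) s)]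

open Classical in
lemma mindeg (n : ℕ) : ∀ (d : ℕ) (A : Finset (Cube n)), A.Nonempty →
    (∀ x ∈ A, d ≤ (Finset.univ.filter fun i => flipCoord x i ∈ A).card) → 2^d ≤ A.card := by
  induction n with
  | zero =>
    intro d A hA hdeg
    obtain ⟨x, hx⟩ := hA
    have h0 := hdeg x hx
    have : (Finset.univ.filter fun i : Fin 0 => flipCoord x i ∈ A).card = 0 := by simp
    rw [this] at h0
    interval_cases d
    simpa using Finset.card_pos.2 ⟨x, hx⟩
  | succ n ih =>
    intro d A hA hdeg
    rcases Nat.eq_zero_or_pos d with rfl | hd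
    · simpa using Finset.card_pos.2 hA
    set As : ℤˣ → Finset (Cube n) := fun s => Finset.univ.filter fun y => Fin.cons s y ∈ A
      with hAs
    have hsplit : A.card = (As 1).card + (As (-1)).card := by
      rw [hAs]
      rw [← card_filter_cons A 1, ← card_filter_cons A (-1)]
      rw [← Finset.card_filter_add_card_filter_not (p := fun x : Cube (n+1) => x 0 = 1)]
      have hfc : A.filter (fun a : Cube (n+1) => ¬ a 0 = 1) = A.filter (fun x => x 0 = -1) := by
        apply Finset.filter_congr
        intro x _
        constructor
        · intro hh
          exact units_eq_neg_of_ne _ _ (fun he => hh he.symm)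
        · intro hh he
          rw [he] at hh
          exact absurd hh (by decide)
      rw [hfc]
    have hnbr : ∀ (s : ℤˣ) (y : Cube n), y ∈ As s →
        (Finset.univ.filter fun j : Fin (n+1) => flipCoord (Fin.cons s y) j ∈ A) ⊆
          insert 0 ((Finset.univ.filter fun i : Fin n => flipCoord y i ∈ As s).image Fin.succ) := by
      intro s y _ j hj
      rw [Finset.mem_filter] at hj
      rcases Fin.eq_zero_or_eq_succ j with rfl | ⟨m, rfl⟩
      · exact Finset.mem_insert_self _ _
      · apply Finset.mem_insert_of_mem
        rw [Finset.mem_image]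
        refine ⟨m, ?_, rfl⟩
        rw [Finset.mem_filter]
        refine ⟨Finset.mem_univ _, ?_⟩
        rw [hAs]
        simp only [Finset.mem_filter, Finset.mem_univ, true_and]
        rw [← flip_cons_succ]
        exact hj.2
    by_cases hboth : (As 1).Nonempty ∧ (As (-1)).Nonempty
    · have key : ∀ s : ℤˣ, (As s).Nonempty → 2^(d-1) ≤ (As s).card := by
        intro s hs
        apply ih (d-1) (As s) hs
        intro y hy
        have h1 := hdeg (Fin.cons s y) (by
          have := hy; rw [hAs] at this; simpa using this)
        have h2 := Finset.card_le_card (hnbr s y hy)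
        have h3 := Finset.card_insert_le (0 : Fin (n+1))
          ((Finset.univ.filter fun i : Fin n => flipCoord y i ∈ As s).image Fin.succ)
        rw [Finset.card_image_of_injective _ (Fin.succ_injective n)] at h3
        omega
      have k1 := key 1 hboth.1
      have k2 := key (-1) hboth.2
      have hpow : 2^(d-1) * 2 = 2^d := by
        rw [← pow_succ]
        congr 1
        omega
      omega
    · obtain ⟨x, hx⟩ := hA
      have hxmem : Fin.tail x ∈ As (x 0) := by
        rw [hAs]
        simp only [Finset.mem_filter, Finset.mem_univ, true_and]
        rw [Fin.cons_self_tail]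
        exact hx
      set s := x 0 with hs
      have hempty : As (-s) = ∅ := by
        rw [Finset.not_nonempty_iff_eq_empty.symm]
        intro hne
        apply hboth
        rcases Int.units_eq_one_or s with h1 | h1
        · rw [h1] at hxmem hne; exact ⟨⟨_, hxmem⟩, hne⟩
        · rw [h1] at hxmem hne
          simp only [neg_neg] at hne
          exact ⟨hne, ⟨_, hxmem⟩⟩
      have key : 2^d ≤ (As s).card := by
        apply ih d (As s) ⟨_, hxmem⟩
        intro y hy
        have h1 := hdeg (Fin.cons s y) (by
          have := hy; rw [hAs] at this; simpa using this)
        have h2 : (Finset.univ.filter fun j : Fin (n+1) => flipCoord (Fin.cons s y) j ∈ A) ⊆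
            ((Finset.univ.filter fun i : Fin n => flipCoord y i ∈ As s).image Fin.succ) := by
          intro j hj
          have hj' := hnbr s y hy hj
          rcases Finset.mem_insert.1 hj' with rfl | hmem
          · exfalso
            rw [Finset.mem_filter] at hj
            have : Fin.cons (-s) y ∈ A := by rw [← flip_cons_zero]; exact hj.2
            have : y ∈ As (-s) := by
              rw [hAs]; simp only [Finset.mem_filter, Finset.mem_univ, true_and]; exact this
            rw [hempty] at this
            exact absurd this (Finset.notMem_empty _)
          · exact hmem
        have h3 := Finset.card_le_card h2
        rw [Finset.card_image_of_injective _ (Fin.succ_injective n)] at h3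
        omega
      have : (As s).card ≤ A.card := by
        rcases Int.units_eq_one_or s with h1 | h1 <;> rw [h1] <;> omega
      omega

lemma card_cube (m : ℕ) : Fintype.card (Cube m) = 2^m := by
  rw [Fintype.card_fun, Fintype.card_units_int, Fintype.card_fin]

open Classical in
lemma sum_sens {m k : ℕ} (f : Cube m → ℤˣ) (hf : IsKFun k f) :
    ∑ i : Fin m, (Finset.univ.filter fun x => f (flipCoord x i) ≠ f x).card = k * 2^m := by
  have hswap : ∑ i : Fin m, (Finset.univ.filter fun x => f (flipCoord x i) ≠ f x).card
      = ∑ x : Cube m, (sens f x).card := by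
    simp only [Finset.card_filter, sens]
    rw [Finset.sum_comm]
  rw [hswap]
  rw [isKFun_iff] at hf
  calc ∑ x : Cube m, (sens f x).card = ∑ _x : Cube m, k := by
        apply Finset.sum_congr rfl
        intro x _
        exact hf x
    _ = k * 2^m := by
        rw [Finset.sum_const, smul_eq_mul, Finset.card_univ, card_cube, mul_comm]

open Classical in
lemma relevant_large {m k : ℕ} (f : Cube m → ℤˣ) (hf : IsKFun k f) (i : Fin m)
    (hrel : Relevant f i) :
    2^(m + 1 - 2*k) ≤ (Finset.univ.filter fun x => f (flipCoord x i) ≠ f x).card := by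
  set A := Finset.univ.filter fun x => f (flipCoord x i) ≠ f x with hA
  have hmemA : ∀ x, x ∈ A ↔ f (flipCoord x i) ≠ f x := by
    intro x; rw [hA]; simp
  obtain ⟨x0, hx0⟩ := hrel
  apply mindeg m (m + 1 - 2*k) A ⟨x0, (hmemA x0).2 hx0⟩
  intro x hx
  rw [hmemA] at hx
  rw [isKFun_iff] at hf
  -- the good set: insert i (univ \ (sens f x ∪ sens f (flipCoord x i)))
  have hgood : insert i (Finset.univ \ (sens f x ∪ sens f (flipCoord x i))) ⊆
      Finset.univ.filter fun j => flipCoord x j ∈ A := by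
    intro j hj
    rw [Finset.mem_filter]
    refine ⟨Finset.mem_univ _, ?_⟩
    rw [hmemA]
    rcases Finset.mem_insert.1 hj with rfl | hj2
    · rw [flip_flip]
      exact fun hc => hx hc.symm
    · rw [Finset.mem_sdiff, Finset.mem_union] at hj2
      push_neg at hj2
      obtain ⟨-, hjx, hjxi⟩ := hj2
      rw [mem_sens] at hjx hjxi
      push_neg at hjx hjxi
      have hji : j ≠ i := by
        rintro rfl
        rw [flip_flip] at hjxi
        exact hx hjxi.symm
      rw [← flip_comm x (Ne.symm hji), hjxi, hjx]
      exact hx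
  have hiu : i ∈ sens f x ∪ sens f (flipCoord x i) := by
    rw [Finset.mem_union, mem_sens]
    exact Or.inl hx
  have hnotin : i ∉ Finset.univ \ (sens f x ∪ sens f (flipCoord x i)) := by
    rw [Finset.mem_sdiff]
    tauto
  have hcard1 : (insert i (Finset.univ \ (sens f x ∪ sens f (flipCoord x i)))).card =
      (Finset.univ \ (sens f x ∪ sens f (flipCoord x i))).card + 1 :=
    Finset.card_insert_of_notMem hnotin
  have hcard2 : (Finset.univ \ (sens f x ∪ sens f (flipCoord x i))).card =
      m - (sens f x ∪ sens f (flipCoord x i)).card := by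
    rw [Finset.card_sdiff_of_subset (Finset.subset_univ _), Finset.card_univ, Fintype.card_fin]
  have hcard3 : (sens f x ∪ sens f (flipCoord x i)).card ≤ 2 * k := by
    have := Finset.card_union_le (sens f x) (sens f (flipCoord x i))
    rw [hf x, hf (flipCoord x i)] at this
    omega
  have hsub := Finset.card_le_card hgood
  have hk : k ≤ m := by
    have := hf x
    have hle : (sens f x).card ≤ m := by
      have := Finset.card_le_card (Finset.subset_univ (sens f x))
      rwa [Finset.card_univ, Fintype.card_fin] at this
    omega
  omega

open Classical in
lemma exists_not_relevant {m k : ℕ} (f : Cube m → ℤˣ) (hf : IsKFun k f)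
    (h2 : k * 2^(2*k) + 2*k < m) : ∃ i, ¬ Relevant f i := by
  by_contra hc
  push_neg at hc
  have hbig : ∀ i : Fin m, 2^(m + 1 - 2*k) ≤
      (Finset.univ.filter fun x => f (flipCoord x i) ≠ f x).card :=
    fun i => relevant_large f hf i (hc i)
  have hsum := sum_sens f hf
  have hlow : m * 2^(m + 1 - 2*k) ≤ k * 2^m := by
    calc m * 2^(m + 1 - 2*k) = ∑ _i : Fin m, 2^(m + 1 - 2*k) := by
          rw [Finset.sum_const, smul_eq_mul, Finset.card_univ, Fintype.card_fin]
      _ ≤ ∑ i : Fin m, (Finset.univ.filter fun x => f (flipCoord x i) ≠ f x).card :=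
          Finset.sum_le_sum (fun i _ => hbig i)
      _ = k * 2^m := hsum
  rcases Nat.eq_zero_or_pos k with rfl | hk
  · have hpos : 0 < 2^(m + 1 - 2*0) := Nat.pow_pos (by norm_num)
    have hm0 : m * 2^(m + 1 - 2*0) ≤ 0 := by simpa using hlow
    have hmul := Nat.le_zero.mp hm0
    have hm : 0 < m := by
      have := h2
      simpa using this
    rcases Nat.mul_eq_zero.mp hmul with h | h
    · omega
    · omega
  · have hexp : 2^m = 2^(2*k - 1) * 2^(m + 1 - 2*k) := by
      rw [← pow_add]
      congr 1
      have h2k : 2*k ≤ m := by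
        have : k ≤ k * 2^(2*k) := Nat.le_mul_of_pos_right k (Nat.pow_pos (by norm_num))
        omega
      omega
    
    rw [hexp, ← mul_assoc] at hlow
    have hm : m ≤ k * 2^(2*k - 1) :=
      Nat.le_of_mul_le_mul_right hlow (Nat.pow_pos (by norm_num))
    have : 2^(2*k-1) ≤ 2^(2*k) := Nat.pow_le_pow_right (by norm_num) (by omega)
    have : k * 2^(2*k-1) ≤ k * 2^(2*k) := Nat.mul_le_mul_left k this
    omega

def extF {n : ℕ} (f : Cube n → ℤˣ) : Cube (n+1) → ℤˣ := fun y => f (Fin.tail y)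

lemma tail_flip_succ {n : ℕ} (y : Cube (n+1)) (i : Fin n) :
    Fin.tail (flipCoord y i.succ) = flipCoord (Fin.tail y) i := by
  funext m
  by_cases hmi : m = i
  · subst hmi
    show flipCoord y m.succ m.succ = flipCoord (Fin.tail y) m m
    rw [flip_self, flip_self]
    rfl
  · show flipCoord y i.succ m.succ = flipCoord (Fin.tail y) i m
    rw [flip_ne _ (fun hh => hmi (Fin.succ_injective _ hh)), flip_ne _ hmi]
    rfl

lemma tail_flip_zero {n : ℕ} (y : Cube (n+1)) :
    Fin.tail (flipCoord y 0) = Fin.tail y := by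
  funext m
  show flipCoord y 0 m.succ = y m.succ
  rw [flip_ne _ (Fin.succ_ne_zero m)]

open Classical in
lemma sens_extF {n : ℕ} (f : Cube n → ℤˣ) (y : Cube (n+1)) :
    sens (extF f) y = (sens f (Fin.tail y)).image Fin.succ := by
  ext j
  rcases Fin.eq_zero_or_eq_succ j with rfl | ⟨i, rfl⟩
  · rw [mem_sens]
    have : extF f (flipCoord y 0) = extF f y := by
      unfold extF
      rw [tail_flip_zero]
    simp only [this, ne_eq, not_true_eq_false, false_iff]
    intro hmem
    obtain ⟨i, -, hi⟩ := Finset.mem_image.1 hmem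
    exact Fin.succ_ne_zero i hi
  · rw [mem_sens]
    have heq : extF f (flipCoord y i.succ) = f (flipCoord (Fin.tail y) i) := by
      unfold extF
      rw [tail_flip_succ]
    rw [heq]
    show f (flipCoord (Fin.tail y) i) ≠ f (Fin.tail y) ↔ _
    constructor
    · intro hne
      exact Finset.mem_image_of_mem _ ((mem_sens _ _ _).2 hne)
    · intro hmem
      obtain ⟨i', hi', heq'⟩ := Finset.mem_image.1 hmem
      have : i' = i := Fin.succ_injective _ heq'
      subst this
      exact (mem_sens _ _ _).1 hi'

lemma isKFun_extF_iff {n k : ℕ} (f : Cube n → ℤˣ) : IsKFun k (extF f) ↔ IsKFun k f := by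
  classical
  rw [isKFun_iff, isKFun_iff]
  constructor
  · intro h x
    have := h (Fin.cons 1 x)
    rwa [sens_extF, Finset.card_image_of_injective _ (Fin.succ_injective n),
      Fin.tail_cons] at this
  · intro h y
    rw [sens_extF, Finset.card_image_of_injective _ (Fin.succ_injective n)]
    exact h _

lemma relevant_extF_zero {n : ℕ} (f : Cube n → ℤˣ) : ¬ Relevant (extF f) 0 := by
  rintro ⟨y, hy⟩
  apply hy
  unfold extF
  rw [tail_flip_zero]

lemma relevant_extF_succ {n : ℕ} (f : Cube n → ℤˣ) (i : Fin n) :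
    Relevant (extF f) i.succ ↔ Relevant f i := by
  constructor
  · rintro ⟨y, hy⟩
    refine ⟨Fin.tail y, ?_⟩
    unfold extF at hy
    rwa [tail_flip_succ] at hy
  · rintro ⟨x, hx⟩
    refine ⟨Fin.cons 1 x, ?_⟩
    unfold extF
    rwa [tail_flip_succ, Fin.tail_cons]

lemma isomU_extF {n : ℕ} {f g : Cube n → ℤˣ} (h : IsomU f g) : IsomU (extF f) (extF g) := by
  obtain ⟨ε, α, σ, h⟩ := h
  refine ⟨ε, Fin.cons 1 α,
    (finSuccEquiv n).trans ((Equiv.optionCongr σ).trans (finSuccEquiv n).symm), fun y => ?_⟩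
  set σ' := (finSuccEquiv n).trans ((Equiv.optionCongr σ).trans (finSuccEquiv n).symm) with hσ'
  have hσsucc : ∀ i : Fin n, σ' i.succ = (σ i).succ := by
    intro i
    rw [hσ']
    simp
  have hclaim : Fin.tail (transf (Fin.cons 1 α) σ' y) = transf α σ (Fin.tail y) := by
    funext i
    show transf (Fin.cons 1 α) σ' y i.succ = transf α σ (Fin.tail y) i
    unfold transf
    rw [hσsucc i, Fin.cons_succ]
    rfl
  show f (Fin.tail y) = ε * extF g (transf (Fin.cons 1 α) σ' y)
  unfold extF
  rw [hclaim]
  exact h (Fin.tail y)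

def relEquiv {n : ℕ} (f : Cube n → ℤˣ) :
    {i : Fin n // Relevant f i} ≃ {j : Fin (n+1) // Relevant (extF f) j} where
  toFun p := ⟨p.1.succ, (relevant_extF_succ f p.1).2 p.2⟩
  invFun q := ⟨q.1.pred (fun h0 => relevant_extF_zero f (h0 ▸ q.2)),
    (relevant_extF_succ f _).1 (by rw [Fin.succ_pred]; exact q.2)⟩
  left_inv p := Subtype.ext (by simp)
  right_inv q := Subtype.ext (by simp)

lemma isomU_of_extF {n : ℕ} {f g : Cube n → ℤˣ} (h : IsomU (extF f) (extF g)) :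
    IsomU f g := by
  classical
  obtain ⟨ε, α, σ', h⟩ := h
  have hrel : ∀ j, Relevant (extF f) j ↔ Relevant (extF g) (σ'.symm j) :=
    fun j => relevant_transf h j
  have key : ∀ i : Fin n, Relevant g i → Relevant (extF f) (σ' i.succ) := by
    intro i hi
    rw [hrel (σ' i.succ), Equiv.symm_apply_apply]
    exact (relevant_extF_succ g i).2 hi
  have hne0 : ∀ (i : Fin n), Relevant g i → σ' i.succ ≠ 0 :=
    fun i hi h0 => relevant_extF_zero f (h0 ▸ key i hi)
  let φ : {i : Fin n // Relevant g i} → {i : Fin n // Relevant f i} := fun p =>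
    ⟨(σ' p.1.succ).pred (hne0 p.1 p.2), by
      have := key p.1 p.2
      rw [← Fin.succ_pred (σ' p.1.succ) (hne0 p.1 p.2)] at this
      exact (relevant_extF_succ f _).1 this⟩
  have hφinj : Function.Injective φ := by
    intro p q hpq
    have h1 : (σ' p.1.succ).pred (hne0 p.1 p.2) = (σ' q.1.succ).pred (hne0 q.1 q.2) :=
      congrArg Subtype.val hpq
    have h2 : σ' p.1.succ = σ' q.1.succ := by
      rw [← Fin.succ_pred (σ' p.1.succ) (hne0 p.1 p.2),
        ← Fin.succ_pred (σ' q.1.succ) (hne0 q.1 q.2), h1]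
    exact Subtype.ext (Fin.succ_injective _ (σ'.injective h2))
  have e3 : {j : Fin (n+1) // Relevant (extF f) j} ≃ {j : Fin (n+1) // Relevant (extF g) j} :=
    { toFun := fun p => ⟨σ'.symm p.1, (hrel p.1).1 p.2⟩
      invFun := fun q => ⟨σ' q.1, (hrel (σ' q.1)).2 (by rw [Equiv.symm_apply_apply]; exact q.2)⟩
      left_inv := fun p => Subtype.ext (Equiv.apply_symm_apply _ _)
      right_inv := fun q => Subtype.ext (Equiv.symm_apply_apply _ _) }
  have hcard : Fintype.card {i : Fin n // Relevant g i} = Fintype.card {i : Fin n // Relevant f i} := by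
    have := Fintype.card_congr ((relEquiv g).trans (e3.symm.trans (relEquiv f).symm))
    exact this
  have hφbij : Function.Bijective φ :=
    (Fintype.bijective_iff_injective_and_card φ).2 ⟨hφinj, hcard⟩
  let e := Equiv.ofBijective φ hφbij
  let τ := e.extendSubtype
  refine ⟨ε, fun i => α i.succ, τ, fun z => ?_⟩
  have h1 : f z = ε * g (Fin.tail (transf α σ' (Fin.cons 1 z))) := by
    have := h (Fin.cons 1 z)
    unfold extF at this
    rwa [Fin.tail_cons] at this
  rw [h1]
  have hgeq : g (Fin.tail (transf α σ' (Fin.cons 1 z))) =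
      g (transf (fun i => α i.succ) τ z) := by
    apply eq_of_agree_on_relevant g
    intro i hi
    show transf α σ' (Fin.cons 1 z) i.succ = α i.succ * z (τ i)
    have hcons : ∀ (j : Fin (n+1)) (hj : j ≠ 0), (Fin.cons 1 z : Cube (n+1)) j = z (j.pred hj) := by
      intro j hj
      rcases Fin.eq_zero_or_eq_succ j with rfl | ⟨m, rfl⟩
      · exact absurd rfl hj
      · rw [Fin.cons_succ, Fin.pred_succ]
    have hτ : τ i = (σ' i.succ).pred (hne0 i hi) := by
      have hext := Equiv.extendSubtype_apply_of_mem e i hi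
      rw [hext]
      rfl
    show α i.succ * (Fin.cons 1 z : Cube (n+1)) (σ' i.succ) = α i.succ * z (τ i)
    rw [hcons (σ' i.succ) (hne0 i hi), hτ]
  rw [hgeq]

lemma isom_toReal_iff {n : ℕ} (f g : Cube n → ℤˣ) :
    Isom (toReal f) (toReal g) ↔ IsomU f g := by
  constructor
  · rintro ⟨ε, α, σ, h⟩
    refine ⟨ε, α, σ, fun x => ?_⟩
    have h1 := h x
    unfold toReal at h1
    have h2 : ((f x : ℤ) : ℝ) = (((ε * g (transf α σ x) : ℤˣ) : ℤ) : ℝ) := by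
      rw [h1]
      push_cast
      rfl
    have h3 : (f x : ℤ) = ((ε * g (transf α σ x) : ℤˣ) : ℤ) := by exact_mod_cast h2
    exact Units.ext h3
  · rintro ⟨ε, α, σ, h⟩
    refine ⟨ε, α, σ, fun x => ?_⟩
    unfold toReal
    rw [h x]
    push_cast
    rfl

lemma exists_ext_of_kfun {n k : ℕ} (F : Cube (n+1) → ℤˣ) (hF : IsKFun k F)
    (hbound : k * 2^(2*k) + 2*k < n+1) :
    ∃ f : Cube n → ℤˣ, IsKFun k f ∧ IsomU F (extF f) := by
  obtain ⟨i, hirr⟩ := exists_not_relevant F hF hbound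
  set σ := Equiv.swap i 0 with hσ
  set F' : Cube (n+1) → ℤˣ := fun x => F (transf 1 σ x) with hF'def
  have hptw : ∀ x, F' x = 1 * F (transf 1 σ x) := fun x => by rw [one_mul]
  have hFF' : IsomU F' F := ⟨1, 1, σ, hptw⟩
  have hF'F : IsomU F F' := isomU_symm hFF'
  have hF' : IsKFun k F' := isKFun_of_isomU hFF' hF
  have h0irr : ¬ Relevant F' 0 := by
    intro hr
    apply hirr
    have := (relevant_transf hptw 0).1 hr
    rwa [hσ, Equiv.symm_swap, Equiv.swap_apply_right] at this
  set f : Cube n → ℤˣ := fun z => F' (Fin.cons 1 z) with hfdef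
  have hext : extF f = F' := by
    funext y
    show F' (Fin.cons 1 (Fin.tail y)) = F' y
    apply eq_of_agree_on_relevant F'
    intro j hj
    rcases Fin.eq_zero_or_eq_succ j with rfl | ⟨m, rfl⟩
    · exact absurd hj h0irr
    · show (Fin.cons 1 (Fin.tail y) : Cube (n+1)) m.succ = y m.succ
      rw [Fin.cons_succ]
      rfl
  have hf : IsKFun k f := by
    rw [← isKFun_extF_iff, hext]
    exact hF'
  refine ⟨f, hf, ?_⟩
  rw [hext]
  exact hF'F

lemma krel_equiv (k n : ℕ) :
    Equivalence (fun (f g : {f : (Fin n → ℤˣ) → ℤˣ // IsKFun k f}) =>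
      Isom (toReal f.1) (toReal g.1)) := by
  constructor
  · intro f
    exact (isom_toReal_iff _ _).2 (isomU_refl _)
  · intro f g h
    exact (isom_toReal_iff _ _).2 (isomU_symm ((isom_toReal_iff _ _).1 h))
  · intro f g h h1 h2
    exact (isom_toReal_iff _ _).2
      (isomU_trans ((isom_toReal_iff _ _).1 h1) ((isom_toReal_iff _ _).1 h2))

noncomputable def extK (k n : ℕ) (f : {f : (Fin n → ℤˣ) → ℤˣ // IsKFun k f}) :
    {f : (Fin (n+1) → ℤˣ) → ℤˣ // IsKFun k f} :=
  ⟨extF f.1, (isKFun_extF_iff f.1).2 f.2⟩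

lemma step_eq (k n : ℕ) (hbound : k * 2^(2*k) + 2*k < n+1) :
    numIsoKFun (n+1) k = numIsoKFun n k := by
  unfold numIsoKFun
  set r := fun (f g : {f : (Fin n → ℤˣ) → ℤˣ // IsKFun k f}) =>
    Isom (toReal f.1) (toReal g.1) with hr
  set r' := fun (f g : {f : (Fin (n+1) → ℤˣ) → ℤˣ // IsKFun k f}) =>
    Isom (toReal f.1) (toReal g.1) with hr'
  have hmap : ∀ f g, r f g → r' (extK k n f) (extK k n g) := by
    intro f g hfg
    exact (isom_toReal_iff _ _).2 (isomU_extF ((isom_toReal_iff _ _).1 hfg))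
  set Φ : Quot r → Quot r' := Quot.map (extK k n) hmap with hΦ
  have hbij : Function.Bijective Φ := by
    constructor
    · intro a b hab
      induction a using Quot.inductionOn with | _ f =>
      induction b using Quot.inductionOn with | _ g =>
      have h1 : Quot.mk r' (extK k n f) = Quot.mk r' (extK k n g) := hab
      rw [Quot.eq] at h1
      have h2 : r' (extK k n f) (extK k n g) := ((krel_equiv k (n+1)).eqvGen_iff).1 h1
      apply Quot.sound
      exact (isom_toReal_iff _ _).2 (isomU_of_extF ((isom_toReal_iff _ _).1 h2))
    · intro b
      induction b using Quot.inductionOn with | _ F =>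
      obtain ⟨f, hf, hIso⟩ := exists_ext_of_kfun F.1 F.2 hbound
      refine ⟨Quot.mk r ⟨f, hf⟩, ?_⟩
      show Quot.mk r' (extK k n ⟨f, hf⟩) = Quot.mk r' F
      apply Quot.sound
      show Isom (toReal (extF f)) (toReal F.1)
      exact (isom_toReal_iff _ _).2 (isomU_symm hIso)
  exact (Nat.card_eq_of_bijective Φ hbij).symm

theorem main (k : ℕ) :
    ∃ N : ℕ, k ≤ N ∧ ∀ n : ℕ, N ≤ n → numIsoKFun n k = numIsoKFun N k := by
  refine ⟨k * 2^(2*k) + 2*k + 1, ?_, ?_⟩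
  · have h0 : 0 ≤ k * 2^(2*k) := Nat.zero_le _
    linarith
  · intro n hn
    induction n, hn using Nat.le_induction with
    | base => rfl
    | succ m hm ih =>
      have hb : k * 2^(2*k) + 2*k < m + 1 := by
        have : k * 2^(2*k) + 2*k < k * 2^(2*k) + 2*k + 1 := by linarith
        linarith
      rw [step_eq k m hb, ih]


end KAux


/-- The sequence `(G(n,k))_{n ≥ k}` is eventually constant. -/
theorem numIsoKFun_eventually_const (k : ℕ) :
    ∃ N : ℕ, k ≤ N ∧ ∀ n : ℕ, N ≤ n → numIsoKFun n k = numIsoKFun N k := by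
  exact KAux.main k
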